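/- Entropic risk band bound: let X and Y be nonnegative real-valued random variables, γ > 0, and Δ ≥ 0 with Δ < E[e^{−γX}], such that F_X(x) − Δ ≤ F_Y(x) ≤ F_X(x) for all x ∈ ℝ. Then ERisk_γ(X) ≤ ERisk_γ(Y) ≤ ERisk_γ(X) − (1/γ) log(1 − Δ / E[e^{−γX}]). In particular, ERisk_γ(Y) − ERisk_γ(X) → 0 as Δ → 0. -/

import Mathlib

open MeasureTheory

/-- The entropic risk `ERisk_γ(Z) = -(1/γ) log E[e^{-γZ}]` of a random variable `Z`. -/
noncomputable def entropicRisk {Ω : Type*} [MeasurableSpace Ω] (μ : Measure Ω)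
    (γ : ℝ) (Z : Ω → ℝ) : ℝ :=
  -(1 / γ) * Real.log (∫ ω, Real.exp (-γ * Z ω) ∂μ)

lemma entropic_layercake_aux {Ω : Type*} [MeasurableSpace Ω] (μ : Measure Ω)
    [IsProbabilityMeasure μ]
    (Z : Ω → ℝ) (hZ : Measurable Z) (hZ0 : 0 ≤ᵐ[μ] Z) (γ : ℝ) (hγ : 0 < γ) :
    ∫ ω, Real.exp (-γ * Z ω) ∂μ
      = (∫⁻ t in Set.Ioi (0:ℝ), μ {ω | t ≤ Real.exp (-γ * Z ω)}).toReal
    ∧ (∫⁻ t in Set.Ioi (0:ℝ), μ {ω | t ≤ Real.exp (-γ * Z ω)}) ≤ 1 := by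
  have hf : Measurable fun ω => Real.exp (-γ * Z ω) := (hZ.const_mul (-γ)).exp
  have hnn : 0 ≤ᵐ[μ] fun ω => Real.exp (-γ * Z ω) :=
    Filter.Eventually.of_forall fun ω => (Real.exp_pos _).le
  have hlay := lintegral_eq_lintegral_meas_le μ hnn hf.aemeasurable
  have hint : ∫ ω, Real.exp (-γ * Z ω) ∂μ
      = (∫⁻ ω, ENNReal.ofReal (Real.exp (-γ * Z ω)) ∂μ).toReal :=
    integral_eq_lintegral_of_nonneg_ae hnn hf.aestronglyMeasurable
  have hle1 : (∫⁻ ω, ENNReal.ofReal (Real.exp (-γ * Z ω)) ∂μ) ≤ 1 := by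
    calc (∫⁻ ω, ENNReal.ofReal (Real.exp (-γ * Z ω)) ∂μ)
        ≤ ∫⁻ _, 1 ∂μ := by
          refine lintegral_mono_ae ?_
          filter_upwards [hZ0] with ω hω
          have hω' : (0:ℝ) ≤ Z ω := hω
          have : Real.exp (-γ * Z ω) ≤ 1 := by
            rw [Real.exp_le_one_iff]
            nlinarith
          simpa using ENNReal.ofReal_le_ofReal this
      _ = 1 := by simp
  exact ⟨by rw [hint, hlay], hlay ▸ hle1⟩

theorem entropicRisk_band_bound
    {Ω : Type*} [MeasurableSpace Ω] (μ : Measure Ω) [IsProbabilityMeasure μ]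
    (X Y : Ω → ℝ) (hX : Measurable X) (hY : Measurable Y)
    (hX0 : 0 ≤ᵐ[μ] X) (hY0 : 0 ≤ᵐ[μ] Y)
    (γ : ℝ) (hγ : 0 < γ) (Δ : ℝ) (hΔ : 0 ≤ Δ)
    (hΔlt : Δ < ∫ ω, Real.exp (-γ * X ω) ∂μ)
    (hband : ∀ x : ℝ,
      (μ {ω | X ω ≤ x}).toReal - Δ ≤ (μ {ω | Y ω ≤ x}).toReal
        ∧ (μ {ω | Y ω ≤ x}).toReal ≤ (μ {ω | X ω ≤ x}).toReal) :
    entropicRisk μ γ X ≤ entropicRisk μ γ Y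
      ∧ entropicRisk μ γ Y
          ≤ entropicRisk μ γ X
            - (1 / γ) * Real.log (1 - Δ / ∫ ω, Real.exp (-γ * X ω) ∂μ) := by
  obtain ⟨hEX, hLX1⟩ := entropic_layercake_aux μ X hX hX0 γ hγ
  obtain ⟨hEY, hLY1⟩ := entropic_layercake_aux μ Y hY hY0 γ hγ
  set LX := ∫⁻ t in Set.Ioi (0:ℝ), μ {ω | t ≤ Real.exp (-γ * X ω)} with hLXdef
  set LY := ∫⁻ t in Set.Ioi (0:ℝ), μ {ω | t ≤ Real.exp (-γ * Y ω)} with hLYdef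
  set EX := ∫ ω, Real.exp (-γ * X ω) ∂μ with hEXdef
  set EY := ∫ ω, Real.exp (-γ * Y ω) ∂μ with hEYdef
  have hLXt : LX ≠ ⊤ := (lt_of_le_of_lt hLX1 (by norm_num)).ne
  have hLYt : LY ≠ ⊤ := (lt_of_le_of_lt hLY1 (by norm_num)).ne
  -- set identity
  have hset : ∀ (Z : Ω → ℝ) (t : ℝ), 0 < t →
      {ω | t ≤ Real.exp (-γ * Z ω)} = {ω | Z ω ≤ -Real.log t / γ} := by
    intro Z t ht
    ext ω
    simp only [Set.mem_setOf_eq]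
    rw [← Real.log_le_iff_le_exp ht, le_div_iff₀ hγ]
    constructor <;> intro h <;> nlinarith
  -- pointwise measure comparisons for t > 0
  have hmeasYX : ∀ t : ℝ, 0 < t →
      μ {ω | t ≤ Real.exp (-γ * Y ω)} ≤ μ {ω | t ≤ Real.exp (-γ * X ω)} := by
    intro t ht
    rw [hset X t ht, hset Y t ht]
    have h := (hband (-Real.log t / γ)).2
    exact (ENNReal.toReal_le_toReal (measure_ne_top μ _) (measure_ne_top μ _)).mp h
  have hmeasXY : ∀ t : ℝ, 0 < t →
      μ {ω | t ≤ Real.exp (-γ * X ω)} ≤ μ {ω | t ≤ Real.exp (-γ * Y ω)} + ENNReal.ofReal Δ := by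
    intro t ht
    rw [hset X t ht, hset Y t ht]
    have h := (hband (-Real.log t / γ)).1
    calc μ {ω | X ω ≤ -Real.log t / γ}
        = ENNReal.ofReal (μ {ω | X ω ≤ -Real.log t / γ}).toReal :=
          (ENNReal.ofReal_toReal (measure_ne_top μ _)).symm
      _ ≤ ENNReal.ofReal ((μ {ω | Y ω ≤ -Real.log t / γ}).toReal + Δ) :=
          ENNReal.ofReal_le_ofReal (by linarith)
      _ = ENNReal.ofReal (μ {ω | Y ω ≤ -Real.log t / γ}).toReal + ENNReal.ofReal Δ :=
          ENNReal.ofReal_add ENNReal.toReal_nonneg hΔ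
      _ = μ {ω | Y ω ≤ -Real.log t / γ} + ENNReal.ofReal Δ := by
          rw [ENNReal.ofReal_toReal (measure_ne_top μ _)]
  -- LY ≤ LX
  have hLYX : LY ≤ LX := by
    refine lintegral_mono_ae ?_
    filter_upwards [self_mem_ae_restrict (measurableSet_Ioi : MeasurableSet (Set.Ioi (0:ℝ)))]
      with t ht
    exact hmeasYX t ht
  -- LX ≤ LY + Δ
  have hLXY : LX ≤ LY + ENNReal.ofReal Δ := by
    have hnull : μ {ω | X ω < 0} = 0 := by
      have h := ae_iff.mp hX0
      simpa [not_le] using h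
    have hzero : (∫⁻ t in Set.Ioi (1:ℝ), μ {ω | t ≤ Real.exp (-γ * X ω)}) = 0 := by
      refine le_antisymm ?_ zero_le
      have : (∫⁻ t in Set.Ioi (1:ℝ), μ {ω | t ≤ Real.exp (-γ * X ω)})
          ≤ ∫⁻ _ in Set.Ioi (1:ℝ), 0 := by
        refine lintegral_mono_ae ?_
        filter_upwards [self_mem_ae_restrict
          (measurableSet_Ioi : MeasurableSet (Set.Ioi (1:ℝ)))] with t ht
        have hsub : {ω | t ≤ Real.exp (-γ * X ω)} ⊆ {ω | X ω < 0} := by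
          intro ω hω
          simp only [Set.mem_setOf_eq] at hω ⊢
          by_contra hc
          push_neg at hc
          have : Real.exp (-γ * X ω) ≤ 1 := by
            rw [Real.exp_le_one_iff]; nlinarith
          have ht1 : (1:ℝ) < t := ht
          linarith
        calc μ {ω | t ≤ Real.exp (-γ * X ω)} ≤ μ {ω | X ω < 0} := measure_mono hsub
          _ = 0 := hnull
      simpa using this
    have hsplit : LX ≤ (∫⁻ t in Set.Ioc (0:ℝ) 1, μ {ω | t ≤ Real.exp (-γ * X ω)})
        + (∫⁻ t in Set.Ioi (1:ℝ), μ {ω | t ≤ Real.exp (-γ * X ω)}) := by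
      rw [hLXdef, ← lintegral_union measurableSet_Ioi (Set.Ioc_disjoint_Ioi le_rfl)]
      apply lintegral_mono_set
      intro t ht
      rcases le_or_gt t 1 with h | h
      · exact Or.inl ⟨ht, h⟩
      · exact Or.inr h
    have hIoc : (∫⁻ t in Set.Ioc (0:ℝ) 1, μ {ω | t ≤ Real.exp (-γ * X ω)})
        ≤ LY + ENNReal.ofReal Δ := by
      calc (∫⁻ t in Set.Ioc (0:ℝ) 1, μ {ω | t ≤ Real.exp (-γ * X ω)})
          ≤ ∫⁻ t in Set.Ioc (0:ℝ) 1,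
              (μ {ω | t ≤ Real.exp (-γ * Y ω)} + ENNReal.ofReal Δ) := by
            refine lintegral_mono_ae ?_
            filter_upwards [self_mem_ae_restrict
              (measurableSet_Ioc : MeasurableSet (Set.Ioc (0:ℝ) 1))] with t ht
            exact hmeasXY t ht.1
        _ = (∫⁻ t in Set.Ioc (0:ℝ) 1, μ {ω | t ≤ Real.exp (-γ * Y ω)})
              + ENNReal.ofReal Δ * volume (Set.Ioc (0:ℝ) 1) := by
            rw [lintegral_add_right _ measurable_const, setLIntegral_const]
        _ ≤ LY + ENNReal.ofReal Δ := by
            have h1 : volume (Set.Ioc (0:ℝ) 1) = 1 := by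
              rw [Real.volume_Ioc]; norm_num
            rw [h1, mul_one]
            exact add_le_add_left (lintegral_mono_set Set.Ioc_subset_Ioi_self) _
    calc LX ≤ _ := hsplit
      _ = ∫⁻ t in Set.Ioc (0:ℝ) 1, μ {ω | t ≤ Real.exp (-γ * X ω)} := by
          rw [hzero, add_zero]
      _ ≤ LY + ENNReal.ofReal Δ := hIoc
  -- real-valued inequalities
  have hEYX : EY ≤ EX := by
    rw [hEX, hEY]
    exact ENNReal.toReal_mono hLXt hLYX
  have hEXY : EX ≤ EY + Δ := by
    have := ENNReal.toReal_mono (by simp [hLYt, ENNReal.add_ne_top]) hLXY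
    rwa [ENNReal.toReal_add hLYt ENNReal.ofReal_ne_top, ENNReal.toReal_ofReal hΔ,
      ← hEX, ← hEY] at this
  have hEXpos : 0 < EX := lt_of_le_of_lt hΔ hΔlt
  have hEYpos : 0 < EY := by linarith
  have hγinv : 0 < 1 / γ := by positivity
  constructor
  · simp only [entropicRisk, ← hEXdef, ← hEYdef]
    have hlog : Real.log EY ≤ Real.log EX := Real.log_le_log hEYpos hEYX
    nlinarith
  · simp only [entropicRisk, ← hEXdef, ← hEYdef]
    have hfrac : Δ / EX < 1 := (div_lt_one hEXpos).mpr hΔlt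
    have h1pos : 0 < 1 - Δ / EX := by linarith
    have h1ne : 1 - Δ / EX ≠ 0 := h1pos.ne'
    have hkey : Real.log EX + Real.log (1 - Δ / EX) = Real.log (EX - Δ) := by
      rw [← Real.log_mul hEXpos.ne' h1ne]
      congr 1
      field_simp
    have hlog : Real.log (EX - Δ) ≤ Real.log EY := Real.log_le_log (by linarith) (by linarith)
    nlinarith
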